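/- In the algebra A' = k⟨x,y,z⟩/(yz−αzy+x², zx−αxz, xy−αyx), for every natural number j one has z·y^j = α^{−j}·y^j·z + α^{−3j+2}·(∑_{ν=0}^{j−1} α^{3ν})·x²·y^{j−1}, where the sum is 0 when j = 0. -/

import Mathlib

noncomputable section

/-- Defining relations of the Type S' Calabi–Yau quantum polynomial algebra
`A' = k⟨x,y,z⟩/(yz - αzy + x², zx - αxz, xy - αyx)`. -/
inductive SRel {k : Type} [Field k] (α : k) :
    FreeAlgebra k (Fin 3) → FreeAlgebra k (Fin 3) → Prop
  | g1 : SRel α (FreeAlgebra.ι k 1 * FreeAlgebra.ι k 2)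
      (α • (FreeAlgebra.ι k 2 * FreeAlgebra.ι k 1) - FreeAlgebra.ι k 0 * FreeAlgebra.ι k 0)
  | g2 : SRel α (FreeAlgebra.ι k 2 * FreeAlgebra.ι k 0)
      (α • (FreeAlgebra.ι k 0 * FreeAlgebra.ι k 2))
  | g3 : SRel α (FreeAlgebra.ι k 0 * FreeAlgebra.ι k 1)
      (α • (FreeAlgebra.ι k 1 * FreeAlgebra.ι k 0))

/-- The image of `x` in `A'`. -/
def SX {k : Type} [Field k] (α : k) : RingQuot (SRel α) :=
  RingQuot.mkAlgHom k (SRel α) (FreeAlgebra.ι k 0)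

/-- The image of `y` in `A'`. -/
def SY {k : Type} [Field k] (α : k) : RingQuot (SRel α) :=
  RingQuot.mkAlgHom k (SRel α) (FreeAlgebra.ι k 1)

/-- The image of `z` in `A'`. -/
def SZ {k : Type} [Field k] (α : k) : RingQuot (SRel α) :=
  RingQuot.mkAlgHom k (SRel α) (FreeAlgebra.ι k 2)

/-- The central element `g = xyz + (1-α³)⁻¹ x³` of `A'`. -/
def SG {k : Type} [Field k] (α : k) : RingQuot (SRel α) :=
  SX α * SY α * SZ α + (1 - α ^ 3)⁻¹ • (SX α) ^ 3

section Aux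
variable {k : Type} [Field k] (α : k)

lemma hYZ : SY α * SZ α = α • (SZ α * SY α) - SX α * SX α := by
  have := RingQuot.mkAlgHom_rel k (SRel.g1 (α := α))
  simpa [SX, SY, SZ, map_mul, map_smul, map_sub] using this

lemma hXY : SX α * SY α = α • (SY α * SX α) := by
  have := RingQuot.mkAlgHom_rel k (SRel.g3 (α := α))
  simpa [SX, SY, SZ, map_mul, map_smul] using this

variable (hα : α ≠ 0)
include hα

lemma hZY : SZ α * SY α = α⁻¹ • (SY α * SZ α) + α⁻¹ • (SX α * SX α) := by
  have h : α • (SZ α * SY α) = SY α * SZ α + SX α * SX α := by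
    rw [hYZ α]; abel
  calc SZ α * SY α = α⁻¹ • (α • (SZ α * SY α)) := by
        rw [smul_smul, inv_mul_cancel₀ hα, one_smul]
    _ = _ := by rw [h, smul_add]

lemma hYX : SY α * SX α = α⁻¹ • (SX α * SY α) := by
  rw [hXY α, smul_smul, inv_mul_cancel₀ hα, one_smul]

lemma hYX2 : SY α * (SX α * SX α) = (α⁻¹ * α⁻¹) • (SX α * SX α * SY α) := by
  rw [← mul_assoc, hYX α hα, smul_mul_assoc, mul_assoc, hYX α hα]
  simp only [mul_smul_comm, smul_smul, mul_assoc]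

lemma hYnX2 (j : ℕ) : SY α ^ j * (SX α * SX α)
    = ((α⁻¹) ^ (2 * j)) • (SX α * SX α * SY α ^ j) := by
  induction j with
  | zero => simp
  | succ n ih =>
    have e0 : SY α ^ (n+1) * (SX α * SX α) = SY α ^ n * (SY α * (SX α * SX α)) := by
      rw [pow_succ, mul_assoc]
    rw [e0, hYX2 α hα, mul_smul_comm]
    have e1 : SY α ^ n * (SX α * SX α * SY α) = SY α ^ n * (SX α * SX α) * SY α :=
      (mul_assoc _ _ _).symm
    rw [e1, ih, smul_mul_assoc, smul_smul]
    have e2 : SX α * SX α * SY α ^ n * SY α = SX α * SX α * SY α ^ (n+1) := by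
      rw [mul_assoc, ← pow_succ]
    rw [e2]
    match_scalars
    ring

lemma key (j : ℕ) : SZ α * SY α ^ (j+1) =
    (α⁻¹) ^ (j+1) • (SY α ^ (j+1) * SZ α) +
    ((α⁻¹) ^ (3 * (j+1)) * α ^ 2 * ∑ ν ∈ Finset.range (j+1), α ^ (3 * ν)) •
      (SX α * SX α * SY α ^ j) := by
  induction j with
  | zero =>
    have hc : (α⁻¹) ^ (3 * 1) * α ^ 2 * ∑ ν ∈ Finset.range 1, α ^ (3 * ν) = α⁻¹ := by
      simp only [Finset.range_one, Finset.sum_singleton, Nat.mul_zero, pow_zero, mul_one]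
      field_simp
    simp only [zero_add, pow_one, pow_zero, mul_one] at hc ⊢
    rw [hc, hZY α hα]
  | succ n ih =>
    have step : SZ α * SY α ^ (n+1+1) = (SZ α * SY α ^ (n+1)) * SY α := by
      rw [mul_assoc, ← pow_succ]
    rw [step, ih, add_mul, smul_mul_assoc, smul_mul_assoc, mul_assoc, hZY α hα]
    simp only [mul_add, mul_smul_comm, smul_add, smul_smul]
    rw [hYnX2 α hα (n+1), smul_smul]
    have e1 : SY α ^ (n+1) * (SY α * SZ α) = SY α ^ (n+1+1) * SZ α := by
      rw [← mul_assoc, ← pow_succ]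
    have e2 : SX α * SX α * SY α ^ n * SY α = SX α * SX α * SY α ^ (n+1) := by
      rw [mul_assoc, ← pow_succ]
    rw [e1, e2]
    have hsum : ∑ ν ∈ Finset.range (n+1+1), α ^ (3 * ν)
        = α ^ 3 * ∑ ν ∈ Finset.range (n+1), α ^ (3 * ν) + 1 := by
      simp only [pow_mul]
      exact geom_sum_succ
    rw [hsum]
    match_scalars
    · ring
    · linear_combination
        (-(α⁻¹ ^ (3 * n + 3) * α⁻¹ * (α * α⁻¹ + 1)) -
          α⁻¹ ^ (3 * n + 3) * α ^ 2 * (∑ ν ∈ Finset.range (n + 1), α ^ (3 * ν)) *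
            ((α * α⁻¹) ^ 2 + α * α⁻¹ + 1)) * (mul_inv_cancel₀ hα)

end Aux

theorem stmt2 {k : Type} [Field k] [IsAlgClosed k] [CharZero k] (α : k)
    (hα : α ≠ 0) (hα3 : α ^ 3 ≠ 1) (j : ℕ) :
    SZ α * (SY α) ^ j =
      (α⁻¹) ^ j • ((SY α) ^ j * SZ α) +
      ((α⁻¹) ^ (3 * j) * α ^ 2 * ∑ ν ∈ Finset.range j, α ^ (3 * ν)) •
        ((SX α) ^ 2 * (SY α) ^ (j - 1)) := by
  cases j with
  | zero => simp
  | succ n =>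
    have h := key α hα n
    simpa [pow_two, Nat.add_sub_cancel] using h
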